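/- Let G be a finite connected directed weighted graph satisfying the Kirchhoff assumption, and U ⊆ V a nonempty subset. Then the smallest eigenvalue of the Dirichlet operator S^D_U satisfies λ_min(S^D_U) ≤ 2·Re(λ) for every eigenvalue λ of the Dirichlet Laplacian Δ^D_U, and the largest eigenvalue satisfies λ_max(S^D_U) ≥ 2·Re(λ) for every eigenvalue λ of Δ^D_U. -/

import Mathlib

open Finset

/-- The weighted inner product `(f,g)_m = ∑_x m(x) f(x) conj(g(x))` on functions `W → ℂ`. -/
noncomputable def innerM {W : Type*} [Fintype W] (m : W → ℝ) (f g : W → ℂ) : ℂ :=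
  ∑ x, (m x : ℂ) * f x * (starRingEnd ℂ) (g x)

/-- The self-adjoint operator `S f(x) = (1/m(x)) ∑_y a(x,y) (f(x) - f(y))`, where
`a(x,y) = b(x,y) + b(y,x)`. -/
noncomputable def opS {W : Type*} [Fintype W] (m : W → ℝ) (b : W → W → ℝ)
    (f : W → ℂ) (x : W) : ℂ :=
  (1 / (m x : ℂ)) * ∑ y, ((b x y + b y x : ℝ) : ℂ) * (f x - f y)

/-- `μ : Fin N → ℝ` lists, increasingly and with multiplicity, eigenvalues of the operator
`S` which is self-adjoint for the weighted inner product with weight `m`: `μ` is monotone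
and there is a corresponding `m`-orthonormal family of eigenfunctions.  When
`N = dim = card W`, such a family is an orthonormal basis, so `μ` is exactly the increasing
enumeration `λ_1 ≤ … ≤ λ_N` of the eigenvalues of `S` with multiplicity. -/
def IsMonoEigenListing {W : Type*} [Fintype W] (m : W → ℝ)
    (S : (W → ℂ) → (W → ℂ)) {N : ℕ} (μ : Fin N → ℝ) : Prop :=
  Monotone μ ∧ ∃ u : Fin N → (W → ℂ),
    (∀ i j, innerM m (u i) (u j) = if i = j then 1 else 0) ∧
    ∀ i, S (u i) = fun x => ((μ i : ℝ) : ℂ) * u i x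

/-- `x` and `y` are neighbours in the directed weighted graph with edge weight `b`. -/
def Nbr {V : Type*} (b : V → V → ℝ) (x y : V) : Prop := 0 < b x y ∨ 0 < b y x

/-- Kirchhoff assumption: `β⁺(x) = β⁻(x)` for all `x`. -/
def Kirchhoff {V : Type*} [Fintype V] (b : V → V → ℝ) : Prop :=
  ∀ x, ∑ y, b x y = ∑ y, b y x

/-- The graph with edge weight `b` is connected, ignoring orientation. -/
def ConnectedGraph {V : Type*} (b : V → V → ℝ) : Prop :=
  ∀ x y : V, Relation.ReflTransGen (Nbr b) x y

/-- The subgraph of `b` induced on `U` is connected, ignoring orientation. -/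
def ConnOn {V : Type*} (b : V → V → ℝ) (U : Finset V) : Prop :=
  ∀ x ∈ U, ∀ y ∈ U,
    Relation.ReflTransGen (fun u v => u ∈ U ∧ v ∈ U ∧ Nbr b u v) x y

/-- The interior of a set of vertices: those of its vertices all of whose neighbours lie
in the set. -/
def interiorSet {V : Type*} (b : V → V → ℝ) (Ω : Set V) : Set V :=
  {x | x ∈ Ω ∧ ∀ y, Nbr b x y → y ∈ Ω}

/-- The operator `S_H` of the subgraph induced on `U` (weights restricted from the ambient
graph), acting on functions `↥U → ℂ`. -/
noncomputable def opSsub {V : Type*} [Fintype V] (m : V → ℝ) (b : V → V → ℝ)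
    (U : Finset V) : (↥U → ℂ) → (↥U → ℂ) :=
  opS (fun x : ↥U => m ↑x) (fun x y : ↥U => b ↑x ↑y)

/-- The Dirichlet operator `S^D_U`, acting on functions supported in `U` (identified with
functions `↥U → ℂ`, extended by zero): `S^D_U f(x) = (1/m(x)) ∑_{y ∈ V} a(x,y)(f(x)-f(y))`
for `x ∈ U`. -/
noncomputable def opSDir {V : Type*} [Fintype V] [DecidableEq V] (m : V → ℝ) (b : V → V → ℝ)
    (U : Finset V) (f : ↥U → ℂ) (x : ↥U) : ℂ :=
  (1 / (m ↑x : ℂ)) * ∑ y : V, ((b ↑x y + b y ↑x : ℝ) : ℂ) *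
    (f x - (if h : y ∈ U then f ⟨y, h⟩ else 0))

/-- The Dirichlet Laplacian `Δ^D_U`, acting on functions supported in `U`:
`Δ^D_U f(x) = (1/m(x)) ∑_{y ∈ V} b(x,y)(f(x)-f(y))` for `x ∈ U`. -/
noncomputable def opDeltaDir {V : Type*} [Fintype V] [DecidableEq V] (m : V → ℝ) (b : V → V → ℝ)
    (U : Finset V) (f : ↥U → ℂ) (x : ↥U) : ℂ :=
  (1 / (m ↑x : ℂ)) * ∑ y : V, ((b ↑x y : ℝ) : ℂ) *
    (f x - (if h : y ∈ U then f ⟨y, h⟩ else 0))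

namespace Stmt16Aux

variable {V : Type*} [Fintype V] [DecidableEq V]

local notation "⟪" x ", " y "⟫" => @inner ℂ _ _ x y

noncomputable def ext (U : Finset V) (f : ↥U → ℂ) : V → ℂ :=
  fun y => if h : y ∈ U then f ⟨y, h⟩ else 0

/-- Generic quadratic-form conversion for operators of shape
`(1/m x) * ∑ y, (c x y) * (f x - ext f y)`. -/
lemma quadform (m : V → ℝ) (hm : ∀ x, 0 < m x) (c : V → V → ℝ) (U : Finset V)
    (f g : ↥U → ℂ) :
    ∑ x : ↥U, (m ↑x : ℂ) *
        ((1 / (m ↑x : ℂ)) * ∑ y : V, ((c ↑x y : ℝ) : ℂ) *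
          (f x - (if h : y ∈ U then f ⟨y, h⟩ else 0))) * (starRingEnd ℂ) (g x)
      = ∑ x : V, ∑ y : V, ((c x y : ℝ) : ℂ) * (ext U f x - ext U f y) *
          (starRingEnd ℂ) (ext U g x) := by
  have hmx : ∀ x : V, (m x : ℂ) ≠ 0 := fun x => by
    exact_mod_cast (hm x).ne'
  have step1 : ∀ x : ↥U, (m ↑x : ℂ) *
        ((1 / (m ↑x : ℂ)) * ∑ y : V, ((c ↑x y : ℝ) : ℂ) *
          (f x - (if h : y ∈ U then f ⟨y, h⟩ else 0))) * (starRingEnd ℂ) (g x)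
      = ∑ y : V, ((c ↑x y : ℝ) : ℂ) * (ext U f ↑x - ext U f y) *
          (starRingEnd ℂ) (ext U g ↑x) := by
    intro x
    rw [← mul_assoc, mul_one_div_cancel (hmx ↑x), one_mul, Finset.sum_mul]
    refine Finset.sum_congr rfl fun y _ => ?_
    simp [ext]
  rw [Finset.sum_congr rfl fun x _ => step1 x, Finset.sum_coe_sort U
    (fun x => ∑ y : V, ((c x y : ℝ) : ℂ) * (ext U f x - ext U f y) *
      (starRingEnd ℂ) (ext U g x))]
  refine Finset.sum_subset (Finset.subset_univ U) fun x _ hx => ?_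
  simp [ext, hx]

lemma symmB (b : V → V → ℝ) (F G : V → ℂ) :
    ∑ x : V, ∑ y : V, ((b x y + b y x : ℝ) : ℂ) * (F x - F y) * (starRingEnd ℂ) (G x)
      = (starRingEnd ℂ) (∑ x : V, ∑ y : V,
          ((b x y + b y x : ℝ) : ℂ) * (G x - G y) * (starRingEnd ℂ) (F x)) := by
  rw [map_sum]
  simp_rw [map_sum, map_mul, map_sub, Complex.conj_ofReal, Complex.conj_conj]
  simp_rw [mul_sub, sub_mul, Finset.sum_sub_distrib]
  congr 1
  · exact Finset.sum_congr rfl fun x _ => Finset.sum_congr rfl fun y _ => by ring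
  · rw [Finset.sum_comm]
    exact Finset.sum_congr rfl fun y _ => Finset.sum_congr rfl fun x _ => by
      push_cast; ring

lemma kirchB (b : V → V → ℝ) (hk : ∀ x, ∑ y, b x y = ∑ y, b y x) (F : V → ℂ) :
    ∑ x : V, ∑ y : V, ((b x y + b y x : ℝ) : ℂ) * (F x - F y) * (starRingEnd ℂ) (F x)
      = (∑ x : V, ∑ y : V, ((b x y : ℝ) : ℂ) * (F x - F y) * (starRingEnd ℂ) (F x))
        + (starRingEnd ℂ) (∑ x : V, ∑ y : V,
            ((b x y : ℝ) : ℂ) * (F x - F y) * (starRingEnd ℂ) (F x)) := by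
  have split : ∑ x : V, ∑ y : V, ((b x y + b y x : ℝ) : ℂ) * (F x - F y) * (starRingEnd ℂ) (F x)
      = (∑ x : V, ∑ y : V, ((b x y : ℝ) : ℂ) * (F x - F y) * (starRingEnd ℂ) (F x))
        + ∑ x : V, ∑ y : V, ((b y x : ℝ) : ℂ) * (F x - F y) * (starRingEnd ℂ) (F x) := by
    rw [← Finset.sum_add_distrib]
    refine Finset.sum_congr rfl fun x _ => ?_
    rw [← Finset.sum_add_distrib]
    exact Finset.sum_congr rfl fun y _ => by push_cast; ring
  rw [split]
  congr 1
  rw [map_sum]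
  simp_rw [map_sum, map_mul, map_sub, Complex.conj_ofReal, Complex.conj_conj]
  simp_rw [mul_sub, sub_mul, Finset.sum_sub_distrib]
  congr 1
  · have l1 : ∀ x : V, ∑ y : V, ((b y x : ℝ) : ℂ) * F x * (starRingEnd ℂ) (F x)
        = ∑ y : V, ((b x y : ℝ) : ℂ) * (starRingEnd ℂ) (F x) * F x := by
      intro x
      have h2 : ∑ y : V, ((b y x : ℝ) : ℂ) = ∑ y : V, ((b x y : ℝ) : ℂ) := by
        exact_mod_cast congrArg (fun r : ℝ => (r : ℂ)) (hk x).symm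
      calc ∑ y : V, ((b y x : ℝ) : ℂ) * F x * (starRingEnd ℂ) (F x)
          = (∑ y : V, ((b y x : ℝ) : ℂ)) * (F x * (starRingEnd ℂ) (F x)) := by
            rw [Finset.sum_mul]; exact Finset.sum_congr rfl fun y _ => by ring
        _ = (∑ y : V, ((b x y : ℝ) : ℂ)) * (F x * (starRingEnd ℂ) (F x)) := by rw [h2]
        _ = ∑ y : V, ((b x y : ℝ) : ℂ) * (starRingEnd ℂ) (F x) * F x := by
            rw [Finset.sum_mul]; exact Finset.sum_congr rfl fun y _ => by ring
    exact Finset.sum_congr rfl fun x _ => l1 x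
  · rw [Finset.sum_comm]
    exact Finset.sum_congr rfl fun y _ => Finset.sum_congr rfl fun x _ => by ring

lemma quadS (m : V → ℝ) (hm : ∀ x, 0 < m x) (b : V → V → ℝ) (U : Finset V)
    (f g : ↥U → ℂ) :
    ∑ x : ↥U, (m ↑x : ℂ) * opSDir m b U f x * (starRingEnd ℂ) (g x)
      = ∑ x : V, ∑ y : V, ((b x y + b y x : ℝ) : ℂ) * (ext U f x - ext U f y) *
          (starRingEnd ℂ) (ext U g x) :=
  quadform m hm (fun x y => b x y + b y x) U f g

lemma quadD (m : V → ℝ) (hm : ∀ x, 0 < m x) (b : V → V → ℝ) (U : Finset V)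
    (f g : ↥U → ℂ) :
    ∑ x : ↥U, (m ↑x : ℂ) * opDeltaDir m b U f x * (starRingEnd ℂ) (g x)
      = ∑ x : V, ∑ y : V, ((b x y : ℝ) : ℂ) * (ext U f x - ext U f y) *
          (starRingEnd ℂ) (ext U g x) :=
  quadform m hm b U f g

lemma opSDir_add (m : V → ℝ) (b : V → V → ℝ) (U : Finset V) (f₁ f₂ : ↥U → ℂ) :
    opSDir m b U (f₁ + f₂) = opSDir m b U f₁ + opSDir m b U f₂ := by
  funext x
  simp only [opSDir, Pi.add_apply]
  rw [← mul_add, ← Finset.sum_add_distrib]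
  congr 1
  refine Finset.sum_congr rfl fun y _ => ?_
  by_cases h : y ∈ U <;> simp [h] <;> ring

lemma opSDir_smul (m : V → ℝ) (b : V → V → ℝ) (U : Finset V) (c : ℂ) (f : ↥U → ℂ) :
    opSDir m b U (c • f) = c • opSDir m b U f := by
  funext x
  simp only [opSDir, Pi.smul_apply, smul_eq_mul]
  have h1 : (∑ y : V, ((b ↑x y + b y ↑x : ℝ) : ℂ) *
        (c * f x - if h : y ∈ U then c * f ⟨y, h⟩ else 0))
      = c * ∑ y : V, ((b ↑x y + b y ↑x : ℝ) : ℂ) *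
        (f x - if h : y ∈ U then f ⟨y, h⟩ else 0) := by
    rw [Finset.mul_sum]
    refine Finset.sum_congr rfl fun y _ => ?_
    by_cases h : y ∈ U <;> simp [h] <;> ring
  rw [h1]; ring

noncomputable def psi (m : V → ℝ) (U : Finset V) (g : ↥U → ℂ) : ↥U → ℂ :=
  fun y => g y / (Real.sqrt (m ↑y) : ℂ)

noncomputable def Tmap (m : V → ℝ) (b : V → V → ℝ) (U : Finset V) :
    EuclideanSpace ℂ ↥U →ₗ[ℂ] EuclideanSpace ℂ ↥U where
  toFun g := WithLp.toLp 2 (fun x : ↥U => (Real.sqrt (m ↑x) : ℂ) * opSDir m b U (psi m U g) x)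
  map_add' g h := by
    ext x
    have hpsi : psi m U (g + h) = psi m U g + psi m U h := by
      funext y; simp [psi, add_div]
    show (Real.sqrt (m ↑x) : ℂ) * opSDir m b U (psi m U (g + h)) x = _
    rw [hpsi, opSDir_add]
    show _ = (Real.sqrt (m ↑x) : ℂ) * opSDir m b U (psi m U g) x
      + (Real.sqrt (m ↑x) : ℂ) * opSDir m b U (psi m U h) x
    simp [mul_add]
  map_smul' c g := by
    ext x
    have hpsi : psi m U (c • g) = c • psi m U g := by
      funext y; simp [psi, mul_div_assoc]
    show (Real.sqrt (m ↑x) : ℂ) * opSDir m b U (psi m U (c • g)) x = _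
    rw [hpsi, opSDir_smul]
    show _ = c * ((Real.sqrt (m ↑x) : ℂ) * opSDir m b U (psi m U g) x)
    simp [smul_eq_mul]; ring

lemma inner_Tmap (m : V → ℝ) (hm : ∀ x, 0 < m x) (b : V → V → ℝ) (U : Finset V)
    (g h : EuclideanSpace ℂ ↥U) :
    ⟪g, Tmap m b U h⟫ = ∑ x : ↥U, (m ↑x : ℂ) * opSDir m b U (psi m U h) x *
      (starRingEnd ℂ) (psi m U g x) := by
  simp only [PiLp.inner_apply, RCLike.inner_apply]
  refine Finset.sum_congr rfl fun x _ => ?_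
  have h1 : (Real.sqrt (m ↑x) : ℂ) * (Real.sqrt (m ↑x) : ℂ) = (m ↑x : ℂ) := by
    rw [← Complex.ofReal_mul, Real.mul_self_sqrt (hm ↑x).le]
  have h2 : (Real.sqrt (m ↑x) : ℂ) ≠ 0 := by
    exact_mod_cast (Real.sqrt_pos.mpr (hm ↑x)).ne'
  show ((Real.sqrt (m ↑x) : ℂ) * opSDir m b U (psi m U h) x) * (starRingEnd ℂ) (g x)
      = (m ↑x : ℂ) * opSDir m b U (psi m U h) x *
        (starRingEnd ℂ) (g x / (Real.sqrt (m ↑x) : ℂ))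
  rw [map_div₀, Complex.conj_ofReal, ← h1]
  field_simp

end Stmt16Aux


open Stmt16Aux

local notation "⟪" x ", " y "⟫" => @inner ℂ _ _ x y

/-- let `G` be a finite connected directed weighted graph satisfying the
Kirchhoff assumption and `U ⊆ V` a nonempty subset.  Then the smallest eigenvalue of the
Dirichlet operator `S^D_U` satisfies `λ_min(S^D_U) ≤ 2 Re(λ)` for every eigenvalue `λ` of
the Dirichlet Laplacian `Δ^D_U`, and the largest one satisfies `2 Re(λ) ≤ λ_max(S^D_U)`. -/
theorem stmt16 {V : Type*} [Fintype V] [DecidableEq V] (m : V → ℝ) (b : V → V → ℝ)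
    (hm : ∀ x, 0 < m x) (hb : ∀ x y, 0 ≤ b x y) (hloop : ∀ x, b x x = 0)
    (hconn : ConnectedGraph b) (hkirch : Kirchhoff b)
    (U : Finset V) (hU : U.Nonempty)
    (lamMin lamMax : ℝ)
    (hmin : IsLeast {t : ℝ | ∃ f : ↥U → ℂ, f ≠ 0 ∧
      opSDir m b U f = fun x => ((t : ℝ) : ℂ) * f x} lamMin)
    (hmax : IsGreatest {t : ℝ | ∃ f : ↥U → ℂ, f ≠ 0 ∧
      opSDir m b U f = fun x => ((t : ℝ) : ℂ) * f x} lamMax) :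
    ∀ lam : ℂ, (∃ f : ↥U → ℂ, f ≠ 0 ∧ opDeltaDir m b U f = fun x => lam * f x) →
      lamMin ≤ 2 * lam.re ∧ 2 * lam.re ≤ lamMax := by
  classical
  intro lam hlam
  obtain ⟨f, hf0, hfeig⟩ := hlam
  have hs : ∀ x : ↥U, (Real.sqrt (m ↑x) : ℂ) ≠ 0 := fun x => by
    exact_mod_cast (Real.sqrt_pos.mpr (hm ↑x)).ne'
  have QS_symm : ∀ f g : ↥U → ℂ,
      ∑ x : ↥U, (m ↑x : ℂ) * opSDir m b U f x * (starRingEnd ℂ) (g x)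
      = (starRingEnd ℂ) (∑ x : ↥U, (m ↑x : ℂ) * opSDir m b U g x * (starRingEnd ℂ) (f x)) := by
    intro f g
    rw [quadS m hm b U f g, quadS m hm b U g f]
    exact symmB b (ext U f) (ext U g)
  have hsym : (Tmap m b U).IsSymmetric := by
    intro g h
    have e1 : ⟪Tmap m b U g, h⟫ = (starRingEnd ℂ) ⟪h, Tmap m b U g⟫ :=
      (inner_conj_symm _ _).symm
    rw [e1, inner_Tmap m hm b U h g, inner_Tmap m hm b U g h,
      QS_symm (psi m U g) (psi m U h), Complex.conj_conj]
  have hn : Module.finrank ℂ (EuclideanSpace ℂ ↥U) = Fintype.card ↥U :=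
    finrank_euclideanSpace
  set Bb := hsym.eigenvectorBasis hn with hBb
  set μ := hsym.eigenvalues hn with hμdef
  have hB : ∀ i, Tmap m b U (Bb i) = ((μ i : ℝ) : ℂ) • Bb i := fun i =>
    hsym.apply_eigenvectorBasis hn i
  have hmem : ∀ i, μ i ∈ {t : ℝ | ∃ f : ↥U → ℂ, f ≠ 0 ∧
      opSDir m b U f = fun x => ((t : ℝ) : ℂ) * f x} := by
    intro i
    refine ⟨psi m U (Bb i), ?_, ?_⟩
    · intro h0
      have hB0 : Bb i = 0 := by
        ext x
        have hx := congrFun h0 x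
        simp only [psi] at hx
        rcases div_eq_zero_iff.mp hx with h | h
        · simpa using h
        · exact absurd h (hs x)
      exact Bb.orthonormal.ne_zero i hB0
    · funext x
      have h1 : (Real.sqrt (m ↑x) : ℂ) * opSDir m b U (psi m U (Bb i)) x
          = ((μ i : ℝ) : ℂ) * Bb i x := by
        have := congrFun (congrArg WithLp.ofLp (hB i)) x
        simpa [Tmap, PiLp.smul_apply, smul_eq_mul] using this
      simp only [psi]
      rw [show ((μ i : ℝ) : ℂ) * (Bb i x / (Real.sqrt (m ↑x) : ℂ))
          = (((μ i : ℝ) : ℂ) * Bb i x) / (Real.sqrt (m ↑x) : ℂ) from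
          (mul_div_assoc _ _ _).symm, eq_div_iff (hs x)]
      linear_combination h1
  have hlow : ∀ i, lamMin ≤ μ i := fun i => hmin.2 (hmem i)
  have hhigh : ∀ i, μ i ≤ lamMax := fun i => hmax.2 (hmem i)
  set g : EuclideanSpace ℂ ↥U := WithLp.toLp 2 (fun x : ↥U => (Real.sqrt (m ↑x) : ℂ) * f x) with hgdef
  have hψg : psi m U g = f := by
    funext x
    show (Real.sqrt (m ↑x) : ℂ) * f x / (Real.sqrt (m ↑x) : ℂ) = f x
    exact mul_div_cancel_left₀ (f x) (hs x)
  set c : Fin (Fintype.card ↥U) → ℂ := fun i => Bb.repr g i with hc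
  have hgsum : ∑ i, c i • Bb i = g := Bb.sum_repr g
  have hinnerBg : ∀ i, ⟪g, Bb i⟫ = (starRingEnd ℂ) (c i) := by
    intro i
    rw [← inner_conj_symm, ← Bb.repr_apply_apply]
  have hTg : Tmap m b U g = ∑ i, c i • (((μ i : ℝ) : ℂ) • Bb i) := by
    conv_lhs => rw [← hgsum]
    rw [map_sum]
    exact Finset.sum_congr rfl fun i _ => by rw [map_smul, hB i]
  have hIP1 : ⟪g, Tmap m b U g⟫ = ((∑ i, μ i * Complex.normSq (c i) : ℝ) : ℂ) := by
    rw [hTg, inner_sum]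
    push_cast
    refine Finset.sum_congr rfl fun i _ => ?_
    rw [inner_smul_right, inner_smul_right, hinnerBg i, ← Complex.mul_conj]
    ring
  have hIP2 : ⟪g, g⟫ = ((∑ i, Complex.normSq (c i) : ℝ) : ℂ) := by
    have e : ⟪g, g⟫ = ⟪g, ∑ i, c i • Bb i⟫ := by rw [hgsum]
    rw [e, inner_sum]
    push_cast
    refine Finset.sum_congr rfl fun i _ => ?_
    rw [inner_smul_right, hinnerBg i, Complex.mul_conj]
  set ν : ℝ := ∑ x : ↥U, m ↑x * Complex.normSq (f x) with hν
  have hIP2' : ⟪g, g⟫ = (ν : ℂ) := by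
    simp only [PiLp.inner_apply, RCLike.inner_apply]
    rw [hν]
    push_cast
    refine Finset.sum_congr rfl fun x _ => ?_
    show ((Real.sqrt (m ↑x) : ℂ) * f x) * (starRingEnd ℂ) ((Real.sqrt (m ↑x) : ℂ) * f x) = _
    have e1 : (Real.sqrt (m ↑x) : ℂ) * (Real.sqrt (m ↑x) : ℂ) = (m ↑x : ℂ) := by
      rw [← Complex.ofReal_mul, Real.mul_self_sqrt (hm ↑x).le]
    have e2 : f x * (starRingEnd ℂ) (f x) = ((Complex.normSq (f x) : ℝ) : ℂ) :=
      Complex.mul_conj _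
    rw [map_mul, Complex.conj_ofReal, ← e1, ← e2]
    ring
  have hsum1 : ∑ i, Complex.normSq (c i) = ν := by
    have := hIP2.symm.trans hIP2'
    exact_mod_cast this
  have hQS : ∑ x : ↥U, (m ↑x : ℂ) * opSDir m b U f x * (starRingEnd ℂ) (f x)
      = ((2 * lam.re * ν : ℝ) : ℂ) := by
    rw [quadS m hm b U f f, kirchB b hkirch (ext U f), ← quadD m hm b U f f]
    have hQΔ : ∑ x : ↥U, (m ↑x : ℂ) * opDeltaDir m b U f x * (starRingEnd ℂ) (f x)
        = lam * (ν : ℂ) := by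
      have heig : ∀ x : ↥U, opDeltaDir m b U f x = lam * f x := fun x => congrFun hfeig x
      calc ∑ x : ↥U, (m ↑x : ℂ) * opDeltaDir m b U f x * (starRingEnd ℂ) (f x)
          = ∑ x : ↥U, lam * ((m ↑x : ℂ) * ((Complex.normSq (f x) : ℝ) : ℂ)) := by
            refine Finset.sum_congr rfl fun x _ => ?_
            rw [heig x, ← Complex.mul_conj]
            ring
        _ = lam * (ν : ℂ) := by
            rw [← Finset.mul_sum, hν]
            push_cast
            ring
    rw [hQΔ, Complex.add_conj]
    push_cast
    simp [Complex.mul_re]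
    ring
  have hIP1' : ⟪g, Tmap m b U g⟫ = ((2 * lam.re * ν : ℝ) : ℂ) := by
    rw [inner_Tmap m hm b U g g, hψg, hQS]
  have hsum2 : ∑ i, μ i * Complex.normSq (c i) = 2 * lam.re * ν := by
    have := hIP1.symm.trans hIP1'
    exact_mod_cast this
  have hνpos : 0 < ν := by
    obtain ⟨x0, hx0⟩ : ∃ x, f x ≠ 0 := by
      by_contra hx; push_neg at hx; exact hf0 (funext hx)
    rw [hν]
    refine Finset.sum_pos' (fun x _ => mul_nonneg (hm ↑x).le (Complex.normSq_nonneg _)) ?_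
    exact ⟨x0, Finset.mem_univ _, mul_pos (hm ↑x0) (Complex.normSq_pos.mpr hx0)⟩
  constructor
  · have h1 : lamMin * ν ≤ 2 * lam.re * ν := by
      calc lamMin * ν = ∑ i, lamMin * Complex.normSq (c i) := by
            rw [← Finset.mul_sum, hsum1]
        _ ≤ ∑ i, μ i * Complex.normSq (c i) :=
            Finset.sum_le_sum fun i _ =>
              mul_le_mul_of_nonneg_right (hlow i) (Complex.normSq_nonneg _)
        _ = 2 * lam.re * ν := hsum2
    exact le_of_mul_le_mul_right h1 hνpos
  · have h1 : 2 * lam.re * ν ≤ lamMax * ν := by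
      calc (2 * lam.re * ν : ℝ) = ∑ i, μ i * Complex.normSq (c i) := hsum2.symm
        _ ≤ ∑ i, lamMax * Complex.normSq (c i) :=
            Finset.sum_le_sum fun i _ =>
              mul_le_mul_of_nonneg_right (hhigh i) (Complex.normSq_nonneg _)
        _ = lamMax * ν := by rw [← Finset.mul_sum, hsum1]
    exact le_of_mul_le_mul_right h1 hνpos
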